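/- Let Δ be the ε-LIP polytope { v in the simplex on 𝒳 : e^{-ε} p_s ≤ Σ_x p_{s|x} v_x ≤ e^ε p_s for all s }. Any mechanism (R, q) satisfying the ε-LIP constraints (each posterior column R_{X|y} ∈ Δ, Rq = p_X) has I(X;Y) at most H(p_X) − min { Σ_i α_i H(v_i) : α_i ≥ 0, Σ_i α_i v_i = p_X }, where v_1,...,v_M are the vertices of Δ; i.e., the optimum over mechanisms with posteriors in Δ is attained with all posterior columns at vertices of Δ. -/

import Mathlib

/-- Any mechanism `(R, q)` whose posterior columns lie in the ε-LIP polytope `Δ`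
(and satisfy the marginal consistency `Rq = pX`) has mutual information at most
`H(pX) − min {∑ i, β i * H(v i) : β ≥ 0, ∑ i, β i • v i = pX}`, where `v i` are the
vertices (extreme points) of `Δ`: the optimum is attained with all posterior columns at
vertices of `Δ`. -/
theorem opt_lip_bound_via_vertices
    {a c M b : ℕ}
    (pX : Fin a → ℝ) (pSgX : Fin a → Fin c → ℝ) (pS : Fin c → ℝ) (ε : ℝ)
    (hε : 0 ≤ ε) (hpX : ∀ x, 0 < pX x) (hpX1 : ∑ x, pX x = 1)
    (hpSgX : ∀ x s, 0 ≤ pSgX x s) (hpSgX1 : ∀ x, ∑ s, pSgX x s = 1)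
    (hpS : ∀ s, pS s = ∑ x, pSgX x s * pX x)
    (Δ : Set (Fin a → ℝ))
    (hΔ : Δ = {w : Fin a → ℝ | (∑ x, w x = 1) ∧ (∀ x, 0 ≤ w x) ∧
        ∀ s, Real.exp (-ε) * pS s ≤ (∑ x, pSgX x s * w x) ∧
          (∑ x, pSgX x s * w x) ≤ Real.exp ε * pS s})
    (v : Fin M → Fin a → ℝ) (hv : Set.extremePoints ℝ Δ = Set.range v)
    (q : Fin b → ℝ) (R : Fin b → Fin a → ℝ)
    (hq : ∀ y, 0 ≤ q y) (hq1 : ∑ y, q y = 1)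
    (hRΔ : ∀ y, R y ∈ Δ) (hmarg : ∀ x, ∑ y, R y x * q y = pX x) :
    (∑ y, ∑ x, q y * R y x * Real.log (R y x / pX x))
      ≤ (-∑ x, pX x * Real.log (pX x)) -
        sInf {t : ℝ | ∃ β : Fin M → ℝ, (∀ i, 0 ≤ β i) ∧
          (∀ x, ∑ i, β i * v i x = pX x) ∧
          t = ∑ i, β i * (-∑ x, v i x * Real.log (v i x))} := by
  classical
  set H : (Fin a → ℝ) → ℝ := fun w => ∑ x, Real.negMulLog (w x) with hH
  -- basic facts about members of Δ
  have hΔmem : ∀ w ∈ Δ, (∑ x, w x = 1) ∧ (∀ x, 0 ≤ w x) := by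
    intro w hw; rw [hΔ] at hw; exact ⟨hw.1, hw.2.1⟩
  have hΔ01 : ∀ w ∈ Δ, ∀ x, w x ∈ Set.Icc (0 : ℝ) 1 := by
    intro w hw x
    obtain ⟨h1, h2⟩ := hΔmem w hw
    exact ⟨h2 x, by rw [← h1]; exact Finset.single_le_sum (fun i _ => h2 i) (Finset.mem_univ x)⟩
  have hHnn : ∀ w ∈ Δ, 0 ≤ H w := by
    intro w hw
    exact Finset.sum_nonneg fun x _ =>
      Real.negMulLog_nonneg (hΔ01 w hw x).1 (hΔ01 w hw x).2
  -- convexity of Δ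
  have hconv : Convex ℝ Δ := by
    rw [hΔ]
    intro w1 hw1 w2 hw2 α γ hα hγ hab
    obtain ⟨h11, h12, h13⟩ := hw1
    obtain ⟨h21, h22, h23⟩ := hw2
    refine ⟨?_, ?_, ?_⟩
    · simp only [Pi.add_apply, Pi.smul_apply, smul_eq_mul]
      rw [Finset.sum_add_distrib, ← Finset.mul_sum, ← Finset.mul_sum, h11, h21]
      linarith
    · intro x
      have := h12 x; have := h22 x
      simp only [Pi.add_apply, Pi.smul_apply, smul_eq_mul]
      nlinarith
    · intro s
      have e1 := h13 s; have e2 := h23 s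
      have key : (∑ x, pSgX x s * (α • w1 + γ • w2) x)
          = α * (∑ x, pSgX x s * w1 x) + γ * (∑ x, pSgX x s * w2 x) := by
        simp only [Pi.add_apply, Pi.smul_apply, smul_eq_mul]
        rw [Finset.mul_sum, Finset.mul_sum, ← Finset.sum_add_distrib]
        exact Finset.sum_congr rfl fun x _ => by ring
      rw [key]
      have hL1 : α * (Real.exp (-ε) * pS s) + γ * (Real.exp (-ε) * pS s)
          = Real.exp (-ε) * pS s := by rw [← add_mul, hab, one_mul]
      have hL2 : α * (Real.exp ε * pS s) + γ * (Real.exp ε * pS s)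
          = Real.exp ε * pS s := by rw [← add_mul, hab, one_mul]
      constructor
      · linarith [mul_le_mul_of_nonneg_left e1.1 hα, mul_le_mul_of_nonneg_left e2.1 hγ]
      · linarith [mul_le_mul_of_nonneg_left e1.2 hα, mul_le_mul_of_nonneg_left e2.2 hγ]
  -- compactness of Δ
  have hclosed : IsClosed Δ := by
    rw [hΔ]
    simp only [Set.setOf_and]
    refine IsClosed.inter (isClosed_eq (continuous_finset_sum _ fun x _ => continuous_apply x)
      continuous_const) (IsClosed.inter ?_ ?_)
    · have : {w : Fin a → ℝ | ∀ x, 0 ≤ w x} = ⋂ x, {w : Fin a → ℝ | 0 ≤ w x} := by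
        ext w; simp
      rw [this]
      exact isClosed_iInter fun x => isClosed_le continuous_const (continuous_apply x)
    · have : {w : Fin a → ℝ | ∀ s, Real.exp (-ε) * pS s ≤ (∑ x, pSgX x s * w x) ∧
          (∑ x, pSgX x s * w x) ≤ Real.exp ε * pS s}
          = ⋂ s, ({w : Fin a → ℝ | Real.exp (-ε) * pS s ≤ (∑ x, pSgX x s * w x)} ∩
            {w : Fin a → ℝ | (∑ x, pSgX x s * w x) ≤ Real.exp ε * pS s}) := by
        ext w; simp [Set.mem_iInter, forall_and]
      rw [this]
      refine isClosed_iInter fun s => IsClosed.inter ?_ ?_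
      · exact isClosed_le continuous_const
          (continuous_finset_sum _ fun x _ => continuous_const.mul (continuous_apply x))
      · exact isClosed_le
          (continuous_finset_sum _ fun x _ => continuous_const.mul (continuous_apply x)) continuous_const
  have hcomp : IsCompact Δ := by
    have hpi : IsCompact (Set.pi Set.univ fun _ : Fin a => Set.Icc (0 : ℝ) 1) :=
      isCompact_univ_pi fun _ => isCompact_Icc
    refine IsCompact.of_isClosed_subset hpi hclosed ?_
    intro w hw
    exact fun x _ => hΔ01 w hw x
  -- Krein–Milman: Δ is the convex hull of its extreme points
  have hΔhull : Δ = convexHull ℝ (Set.range v) := by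
    have h := closure_convexHull_extremePoints hcomp hconv
    rw [hv] at h
    rw [← h, IsClosed.closure_eq ((Set.finite_range v).isClosed_convexHull (𝕜 := ℝ))]
  -- v i ∈ Δ
  have hvΔ : ∀ i, v i ∈ Δ := by
    intro i
    have : v i ∈ Set.extremePoints ℝ Δ := by rw [hv]; exact ⟨i, rfl⟩
    exact this.1
  -- decompose each posterior column
  have hweights : ∀ y : Fin b, ∃ lam : Fin M → ℝ, (∀ i, 0 ≤ lam i) ∧ (∑ i, lam i) = 1 ∧
      (∀ x, ∑ i, lam i * v i x = R y x) := by
    intro y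
    have hm : R y ∈ convexHull ℝ (Set.range v) := hΔhull ▸ hRΔ y
    rw [convexHull_range_eq_exists_affineCombination] at hm
    obtain ⟨s, w, hw0, hw1, hwx⟩ := hm
    refine ⟨fun i => if i ∈ s then w i else 0, ?_, ?_, ?_⟩
    · intro i; by_cases h : i ∈ s
      · simpa [h] using hw0 i h
      · simp [h]
    · rw [Finset.sum_ite_mem, Finset.univ_inter, hw1]
    · intro x
      have key := hwx
      rw [Finset.affineCombination_eq_linear_combination s v w hw1] at key
      have hx := congrFun key x
      simp only [Finset.sum_apply, Pi.smul_apply, smul_eq_mul] at hx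
      calc ∑ i, (if i ∈ s then w i else 0) * v i x
          = ∑ i, (if i ∈ s then w i * v i x else 0) :=
            Finset.sum_congr rfl fun i _ => by split <;> simp
        _ = ∑ i ∈ s, w i * v i x := by rw [Finset.sum_ite_mem, Finset.univ_inter]
        _ = R y x := hx
  choose lam hlam0 hlam1 hlamv using hweights
  -- Jensen: entropy is concave
  have hJensen : ∀ y : Fin b, ∑ i, lam y i * H (v i) ≤ H (R y) := by
    intro y
    have hcoord : ∀ x : Fin a,
        ∑ i, lam y i * Real.negMulLog (v i x) ≤ Real.negMulLog (R y x) := by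
      intro x
      have := Real.concaveOn_negMulLog.le_map_sum (t := Finset.univ)
        (w := lam y) (p := fun i => v i x)
        (fun i _ => hlam0 y i) (hlam1 y) (fun i _ => (hΔ01 _ (hvΔ i) x).1)
      simpa [smul_eq_mul, hlamv y x] using this
    calc ∑ i, lam y i * H (v i)
        = ∑ x, ∑ i, lam y i * Real.negMulLog (v i x) := by
          rw [Finset.sum_comm]
          exact Finset.sum_congr rfl fun i _ => by rw [hH, Finset.mul_sum]
      _ ≤ ∑ x, Real.negMulLog (R y x) := Finset.sum_le_sum fun x _ => hcoord x
      _ = H (R y) := rfl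
  -- the candidate β
  set β : Fin M → ℝ := fun i => ∑ y, q y * lam y i with hβdef
  have hβ0 : ∀ i, 0 ≤ β i := fun i =>
    Finset.sum_nonneg fun y _ => mul_nonneg (hq y) (hlam0 y i)
  have hβv : ∀ x, ∑ i, β i * v i x = pX x := by
    intro x
    rw [← hmarg x]
    calc ∑ i, (∑ y, q y * lam y i) * v i x
        = ∑ i, ∑ y, q y * lam y i * v i x := by
          exact Finset.sum_congr rfl fun i _ => by rw [Finset.sum_mul]
      _ = ∑ y, ∑ i, q y * lam y i * v i x := Finset.sum_comm
      _ = ∑ y, R y x * q y := by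
          refine Finset.sum_congr rfl fun y _ => ?_
          rw [← hlamv y x, Finset.sum_mul]
          exact Finset.sum_congr rfl fun i _ => by ring
  -- negMulLog sum rewrite
  have hHeq : ∀ w : Fin a → ℝ, H w = -∑ x, w x * Real.log (w x) := by
    intro w
    rw [hH, ← Finset.sum_neg_distrib]
    exact Finset.sum_congr rfl fun x _ => by rw [Real.negMulLog]; ring
  -- membership of t₀ in the set
  set S : Set ℝ := {t : ℝ | ∃ β : Fin M → ℝ, (∀ i, 0 ≤ β i) ∧
      (∀ x, ∑ i, β i * v i x = pX x) ∧
      t = ∑ i, β i * (-∑ x, v i x * Real.log (v i x))} with hSdef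
  have ht0mem : (∑ i, β i * H (v i)) ∈ S := by
    refine ⟨β, hβ0, hβv, ?_⟩
    exact Finset.sum_congr rfl fun i _ => by rw [hHeq (v i)]
  have hSbdd : BddBelow S := by
    refine ⟨0, fun t ht => ?_⟩
    obtain ⟨β', hβ'0, _, rfl⟩ := ht
    refine Finset.sum_nonneg fun i _ => mul_nonneg (hβ'0 i) ?_
    rw [← hHeq (v i)]
    exact hHnn _ (hvΔ i)
  have hInf : sInf S ≤ ∑ y, q y * H (R y) := by
    refine le_trans (csInf_le hSbdd ht0mem) ?_
    calc ∑ i, β i * H (v i)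
        = ∑ i, ∑ y, q y * lam y i * H (v i) := by
          exact Finset.sum_congr rfl fun i _ => by rw [hβdef, Finset.sum_mul]
      _ = ∑ y, ∑ i, q y * lam y i * H (v i) := Finset.sum_comm
      _ ≤ ∑ y, q y * H (R y) := by
          refine Finset.sum_le_sum fun y _ => ?_
          have : ∑ i, q y * lam y i * H (v i) = q y * ∑ i, lam y i * H (v i) := by
            rw [Finset.mul_sum]
            exact Finset.sum_congr rfl fun i _ => by ring
          rw [this]
          exact mul_le_mul_of_nonneg_left (hJensen y) (hq y)
  -- rewrite the mutual information
  have hMI : (∑ y, ∑ x, q y * R y x * Real.log (R y x / pX x))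
      = (-∑ x, pX x * Real.log (pX x)) - ∑ y, q y * H (R y) := by
    have hterm : ∀ y x, q y * R y x * Real.log (R y x / pX x)
        = q y * R y x * Real.log (R y x) - q y * R y x * Real.log (pX x) := by
      intro y x
      by_cases h : R y x = 0
      · simp [h]
      · rw [Real.log_div h (ne_of_gt (hpX x))]; ring
    calc ∑ y, ∑ x, q y * R y x * Real.log (R y x / pX x)
        = (∑ y, ∑ x, q y * R y x * Real.log (R y x))
          - ∑ y, ∑ x, q y * R y x * Real.log (pX x) := by
          rw [← Finset.sum_sub_distrib]
          refine Finset.sum_congr rfl fun y _ => ?_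
          rw [← Finset.sum_sub_distrib]
          exact Finset.sum_congr rfl fun x _ => hterm y x
      _ = (-∑ y, q y * H (R y)) - ∑ x, pX x * Real.log (pX x) := by
          congr 1
          · rw [← Finset.sum_neg_distrib]
            refine Finset.sum_congr rfl fun y _ => ?_
            rw [hHeq (R y), mul_neg, neg_neg, Finset.mul_sum]
            exact Finset.sum_congr rfl fun x _ => by ring
          · rw [Finset.sum_comm]
            refine Finset.sum_congr rfl fun x _ => ?_
            rw [← hmarg x, Finset.sum_mul]
            exact Finset.sum_congr rfl fun y _ => by ring
      _ = (-∑ x, pX x * Real.log (pX x)) - ∑ y, q y * H (R y) := by ring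
  rw [hMI]
  linarith [hInf]
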